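/- arXiv:2312.03398 — 5 statements merged into one kernel-verified Lean document; each statement's English description precedes it below -/
import Mathlib

section
/- Let s ∈ (0,1/2], s₀ ∈ [s,2s], r ∈ [0,1/2], r₀ ∈ [0,2r] with r₀ s + r s₀ ≥ 2rs. Then for all ζ ∈ ℝ^m and η ∈ ℝ^d, |ζ|^{2s-s₀} ⟨η⟩^{-r₀} ≤ max{1, |ζ|^s ⟨η⟩^{-r}}. -/
/-- Let `s ∈ (0,1/2]`, `s₀ ∈ [s,2s]`, `r ∈ [0,1/2]`, `r₀ ∈ [0,2r]` with
`r₀ s + r s₀ ≥ 2rs`. Then for all `ζ ∈ ℝ^m` and `η ∈ ℝ^d`,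
`|ζ|^{2s-s₀} ⟨η⟩^{-r₀} ≤ max {1, |ζ|^s ⟨η⟩^{-r}}`, where `⟨η⟩ = (1+|η|²)^{1/2}`. -/
theorem stmt_3 (m d : ℕ) (s s₀ r r₀ : ℝ)
    (hs0 : 0 < s) (hs1 : s ≤ 1 / 2) (hs₀l : s ≤ s₀) (hs₀u : s₀ ≤ 2 * s)
    (hr0 : 0 ≤ r) (hr1 : r ≤ 1 / 2) (hr₀l : 0 ≤ r₀) (hr₀u : r₀ ≤ 2 * r)
    (hmix : 2 * r * s ≤ r₀ * s + r * s₀)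
    (ζ : EuclideanSpace ℝ (Fin m)) (η : EuclideanSpace ℝ (Fin d)) :
    ‖ζ‖ ^ (2 * s - s₀) * ((1 + ‖η‖ ^ 2) ^ ((1 : ℝ) / 2)) ^ (-r₀) ≤
      max 1 (‖ζ‖ ^ s * ((1 + ‖η‖ ^ 2) ^ ((1 : ℝ) / 2)) ^ (-r)) := by
  set A : ℝ := ‖ζ‖ with hA
  set B : ℝ := (1 + ‖η‖ ^ 2) ^ ((1 : ℝ) / 2) with hBdef
  have hA0 : 0 ≤ A := norm_nonneg _
  have hB1 : (1 : ℝ) ≤ B := by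
    rw [hBdef]
    apply Real.one_le_rpow (by nlinarith [sq_nonneg ‖η‖]) (by norm_num)
  have hB0 : (0 : ℝ) < B := lt_of_lt_of_le one_pos hB1
  set α : ℝ := (2 * s - s₀) / s with hαdef
  have hα0 : 0 ≤ α := div_nonneg (by linarith) hs0.le
  have hα1 : α ≤ 1 := by
    rw [hαdef, div_le_one hs0]; linarith
  have hαr : α * r ≤ r₀ := by
    rw [hαdef, div_mul_eq_mul_div, div_le_iff₀ hs0]; nlinarith
  have h1 : A ^ (2 * s - s₀) = (A ^ s) ^ α := by
    rw [← Real.rpow_mul hA0]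
    rw [hαdef, mul_div_cancel₀ _ hs0.ne']
  have h2 : B ^ (-r₀) = (B ^ (-r)) ^ α * B ^ (-(r₀ - α * r)) := by
    rw [← Real.rpow_mul hB0.le, ← Real.rpow_add hB0]
    congr 1
    ring
  have h3 : B ^ (-(r₀ - α * r)) ≤ 1 :=
    Real.rpow_le_one_of_one_le_of_nonpos hB1 (by linarith)
  set x : ℝ := A ^ s * B ^ (-r) with hx
  have hx0 : 0 ≤ x := mul_nonneg (Real.rpow_nonneg hA0 _) (Real.rpow_nonneg hB0.le _)
  have key : A ^ (2 * s - s₀) * B ^ (-r₀) ≤ x ^ α := by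
    rw [h1, h2, hx, Real.mul_rpow (Real.rpow_nonneg hA0 _) (Real.rpow_nonneg hB0.le _)]
    calc (A ^ s) ^ α * ((B ^ (-r)) ^ α * B ^ (-(r₀ - α * r)))
        ≤ (A ^ s) ^ α * ((B ^ (-r)) ^ α * 1) := by
          apply mul_le_mul_of_nonneg_left _ (Real.rpow_nonneg (Real.rpow_nonneg hA0 _) _)
          apply mul_le_mul_of_nonneg_left h3 (Real.rpow_nonneg (Real.rpow_nonneg hB0.le _) _)
      _ = (A ^ s) ^ α * (B ^ (-r)) ^ α := by ring
  refine key.trans ?_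
  rcases le_total x 1 with hx1 | hx1
  · exact le_max_of_le_left (Real.rpow_le_one hx0 hx1 hα0)
  · refine le_max_of_le_right ?_
    calc x ^ α ≤ x ^ (1 : ℝ) := Real.rpow_le_rpow_of_exponent_le hx1 hα1
      _ = x := Real.rpow_one x
end

section
/- Let σ > 0 and define, for fixed ξ ∈ ℝ^d, the function Φ(η) := ∫₀¹ |θξ - η|^σ dθ for η ∈ ℝ^d. Then for all η ∈ ℝ^d, 2^σ (1+σ) Φ(η) ≥ |ξ|^σ. -/
open Set intervalIntegral MeasureTheory

private lemma cont_abs_rpow (σ c : ℝ) (hσ : 0 < σ) :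
    Continuous fun θ : ℝ => |θ - c| ^ σ := by
  apply Continuous.rpow_const
  · exact (continuous_id.sub continuous_const).abs
  · exact fun x => Or.inr hσ.le

private lemma int_rpow_aux (σ : ℝ) (hσ : 0 < σ) (a : ℝ) :
    ∫ θ in (0:ℝ)..a, θ ^ σ = a ^ (σ + 1) / (σ + 1) := by
  rw [integral_rpow (Or.inl (by linarith))]
  rw [Real.zero_rpow (by linarith : σ + 1 ≠ 0)]
  ring

private lemma key (σ : ℝ) (hσ : 0 < σ) (c : ℝ) :
    1 / (2 ^ σ * (1 + σ)) ≤ ∫ θ in (0:ℝ)..1, |θ - c| ^ σ := by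
  have h2 : (1:ℝ) ≤ 2 ^ σ := Real.one_le_rpow (by norm_num) hσ.le
  have h2pos : (0:ℝ) < 2 ^ σ := by positivity
  have hσ1 : (0:ℝ) < 1 + σ := by linarith
  have hint : ∀ c' : ℝ, IntervalIntegrable (fun θ : ℝ => |θ - c'| ^ σ) volume 0 1 :=
    fun c' => (cont_abs_rpow σ c' hσ).intervalIntegrable 0 1
  rcases le_or_gt c 0 with hc | hc
  · -- |θ - c| ≥ θ on [0,1]
    have h1 : ∫ θ in (0:ℝ)..1, θ ^ σ ≤ ∫ θ in (0:ℝ)..1, |θ - c| ^ σ := by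
      apply intervalIntegral.integral_mono_on (by norm_num)
        ((Real.continuous_rpow_const hσ.le).intervalIntegrable 0 1) (hint c)
      intro θ hθ
      have hθ0 : 0 ≤ θ := hθ.1
      apply Real.rpow_le_rpow hθ0 _ hσ.le
      rw [abs_of_nonneg (by linarith)]; linarith
    rw [int_rpow_aux σ hσ 1, Real.one_rpow] at h1
    calc 1 / (2 ^ σ * (1 + σ)) ≤ 1 / (σ + 1) := by
          rw [div_le_div_iff₀ (by positivity) (by linarith)]
          nlinarith
      _ ≤ _ := h1
  rcases le_or_gt 1 c with hc1 | hc1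
  · -- |θ - c| ≥ 1 - θ on [0,1]
    have h1 : ∫ θ in (0:ℝ)..1, (1 - θ) ^ σ ≤ ∫ θ in (0:ℝ)..1, |θ - c| ^ σ := by
      apply intervalIntegral.integral_mono_on (by norm_num) _ (hint c)
      · intro θ hθ
        apply Real.rpow_le_rpow (by linarith [hθ.2]) _ hσ.le
        rw [abs_sub_comm, abs_of_nonneg (by linarith [hθ.2])]
        linarith [hθ.1]
      · have : Continuous fun θ : ℝ => (1 - θ) ^ σ := by
          apply Continuous.rpow_const (continuous_const.sub continuous_id)
          exact fun x => Or.inr hσ.le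
        exact this.intervalIntegrable 0 1
    have h2' : ∫ θ in (0:ℝ)..1, (1 - θ) ^ σ = 1 / (σ + 1) := by
      rw [intervalIntegral.integral_comp_sub_left (fun x : ℝ => x ^ σ) 1]
      norm_num [int_rpow_aux σ hσ 1]
    rw [h2'] at h1
    calc 1 / (2 ^ σ * (1 + σ)) ≤ 1 / (σ + 1) := by
          rw [div_le_div_iff₀ (by positivity) (by linarith)]
          nlinarith
      _ ≤ _ := h1
  · -- 0 < c < 1 : split the integral at c
    have hsplit : ∫ θ in (0:ℝ)..1, |θ - c| ^ σ
        = (∫ θ in (0:ℝ)..c, |θ - c| ^ σ) + ∫ θ in c..(1:ℝ), |θ - c| ^ σ := by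
      rw [intervalIntegral.integral_add_adjacent_intervals
        ((cont_abs_rpow σ c hσ).intervalIntegrable 0 c)
        ((cont_abs_rpow σ c hσ).intervalIntegrable c 1)]
    have hA : ∫ θ in (0:ℝ)..c, |θ - c| ^ σ = c ^ (σ + 1) / (σ + 1) := by
      have : ∫ θ in (0:ℝ)..c, |θ - c| ^ σ = ∫ θ in (0:ℝ)..c, (c - θ) ^ σ := by
        apply intervalIntegral.integral_congr
        intro θ hθ
        rw [uIcc_of_le hc.le] at hθ
        dsimp only
        rw [abs_sub_comm, abs_of_nonneg (by linarith [hθ.2])]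
      rw [this, intervalIntegral.integral_comp_sub_left (fun x : ℝ => x ^ σ) c]
      simp [int_rpow_aux σ hσ c]
    have hB : ∫ θ in c..(1:ℝ), |θ - c| ^ σ = (1 - c) ^ (σ + 1) / (σ + 1) := by
      have : ∫ θ in c..(1:ℝ), |θ - c| ^ σ = ∫ θ in c..(1:ℝ), (θ - c) ^ σ := by
        apply intervalIntegral.integral_congr
        intro θ hθ
        rw [uIcc_of_le hc1.le] at hθ
        dsimp only
        rw [abs_of_nonneg (by linarith [hθ.1])]
      rw [this, intervalIntegral.integral_comp_sub_right (fun x : ℝ => x ^ σ) c]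
      simp [int_rpow_aux σ hσ (1 - c)]
    rw [hsplit, hA, hB]
    -- convexity: (1/2)^(σ+1) ≤ (c^(σ+1) + (1-c)^(σ+1))/2
    have hconv := (convexOn_rpow (by linarith : (1:ℝ) ≤ σ + 1)).2
      (mem_Ici.mpr hc.le) (mem_Ici.mpr (by linarith : (0:ℝ) ≤ 1 - c))
      (by norm_num : (0:ℝ) ≤ 1/2) (by norm_num : (0:ℝ) ≤ 1/2) (by norm_num)
    have hconv' : ((1:ℝ)/2) ^ (σ + 1) ≤ 1/2 * c ^ (σ + 1) + 1/2 * (1 - c) ^ (σ + 1) := by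
      have heq : (1/2 : ℝ) • c + (1/2 : ℝ) • (1 - c) = 1/2 := by
        simp [smul_eq_mul]; ring
      rw [heq] at hconv
      simpa [smul_eq_mul] using hconv
    have hhalf : ((1:ℝ)/2) ^ (σ + 1) = 1 / (2 ^ σ * 2) := by
      rw [Real.div_rpow (by norm_num) (by norm_num), Real.one_rpow,
        Real.rpow_add (by norm_num), Real.rpow_one]
    rw [hhalf] at hconv'
    rw [← add_div, div_le_div_iff₀ (by positivity) (by linarith)]
    have hsum : 1 / 2 ^ σ ≤ c ^ (σ + 1) + (1 - c) ^ (σ + 1) := by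
      have he : (1:ℝ) / (2 ^ σ * 2) = (1 / 2 ^ σ) / 2 := by ring
      rw [he] at hconv'
      linarith
    have hmul := mul_le_mul_of_nonneg_right hsum (le_of_lt (mul_pos h2pos hσ1))
    have heq2 : 1 / 2 ^ σ * (2 ^ σ * (1 + σ)) = 1 + σ := by
      field_simp
    rw [heq2] at hmul
    linarith

/-- Let `σ > 0`, `ξ ∈ ℝ^d`, and `Φ(η) := ∫₀¹ |θξ - η|^σ dθ`. Then
`2^σ (1+σ) Φ(η) ≥ |ξ|^σ` for all `η`. -/
theorem stmt_4 (d : ℕ) (σ : ℝ) (hσ : 0 < σ) (ξ η : EuclideanSpace ℝ (Fin d)) :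
    ‖ξ‖ ^ σ ≤ 2 ^ σ * (1 + σ) * ∫ θ in (0:ℝ)..1, ‖θ • ξ - η‖ ^ σ := by
  have h2pos : (0:ℝ) < 2 ^ σ := by positivity
  have hσ1 : (0:ℝ) < 1 + σ := by linarith
  have hcontg : Continuous fun θ : ℝ => ‖θ • ξ - η‖ ^ σ := by
    apply Continuous.rpow_const
    · exact ((continuous_id.smul continuous_const).sub continuous_const).norm
    · exact fun x => Or.inr hσ.le
  by_cases hξ : ξ = 0
  · subst hξ
    rw [norm_zero, Real.zero_rpow hσ.ne']
    have : 0 ≤ ∫ θ in (0:ℝ)..1, ‖θ • (0 : EuclideanSpace ℝ (Fin d)) - η‖ ^ σ := by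
      apply intervalIntegral.integral_nonneg (by norm_num)
      intro θ _; positivity
    positivity
  · have hnξ : (0:ℝ) < ‖ξ‖ := norm_pos_iff.mpr hξ
    set c : ℝ := (inner ℝ ξ η : ℝ) / ‖ξ‖ ^ 2 with hc
    -- pointwise bound: ‖ξ‖ * |θ - c| ≤ ‖θ • ξ - η‖
    have hpt : ∀ θ : ℝ, ‖ξ‖ * |θ - c| ≤ ‖θ • ξ - η‖ := by
      intro θ
      have hinner : (inner ℝ ξ (θ • ξ - η) : ℝ) = ‖ξ‖ ^ 2 * (θ - c) := by
        rw [inner_sub_right, real_inner_smul_right, real_inner_self_eq_norm_sq]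
        rw [hc]; field_simp
      have hCS := abs_real_inner_le_norm ξ (θ • ξ - η)
      rw [hinner, abs_mul, abs_of_nonneg (by positivity : (0:ℝ) ≤ ‖ξ‖ ^ 2)] at hCS
      have : ‖ξ‖ * (‖ξ‖ * |θ - c|) ≤ ‖ξ‖ * ‖θ • ξ - η‖ := by
        calc ‖ξ‖ * (‖ξ‖ * |θ - c|) = ‖ξ‖ ^ 2 * |θ - c| := by ring
          _ ≤ ‖ξ‖ * ‖θ • ξ - η‖ := hCS
      exact le_of_mul_le_mul_left this hnξ
    have hmono : ∫ θ in (0:ℝ)..1, ‖ξ‖ ^ σ * |θ - c| ^ σ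
        ≤ ∫ θ in (0:ℝ)..1, ‖θ • ξ - η‖ ^ σ := by
      apply intervalIntegral.integral_mono_on (by norm_num)
        (((continuous_const.mul (cont_abs_rpow σ c hσ))).intervalIntegrable 0 1)
        (hcontg.intervalIntegrable 0 1)
      intro θ _
      show ‖ξ‖ ^ σ * |θ - c| ^ σ ≤ ‖θ • ξ - η‖ ^ σ
      rw [← Real.mul_rpow hnξ.le (abs_nonneg _)]
      exact Real.rpow_le_rpow (by positivity) (hpt θ) hσ.le
    rw [intervalIntegral.integral_const_mul] at hmono
    have hkey := key σ hσ c
    have hnorm : 0 < ‖ξ‖ ^ σ := Real.rpow_pos_of_pos hnξ σ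
    have h1 : ‖ξ‖ ^ σ * (1 / (2 ^ σ * (1 + σ)))
        ≤ ∫ θ in (0:ℝ)..1, ‖θ • ξ - η‖ ^ σ :=
      le_trans (by nlinarith [hkey]) hmono
    calc ‖ξ‖ ^ σ = 2 ^ σ * (1 + σ) * (‖ξ‖ ^ σ * (1 / (2 ^ σ * (1 + σ)))) := by
          field_simp
      _ ≤ 2 ^ σ * (1 + σ) * ∫ θ in (0:ℝ)..1, ‖θ • ξ - η‖ ^ σ := by
          apply mul_le_mul_of_nonneg_left h1 (by positivity)
end

section
/- Let σ > 0 and ξ, η ∈ ℝ^d. Then 2^σ (1 + 2^σ(1+σ)) ∫₀¹ |θξ - η|^σ dθ ≥ |η|^σ. -/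
open intervalIntegral Real

private lemma aux_pow_int (σ c : ℝ) (hσ : 0 < σ) (hc : 0 ≤ c) :
    ∫ θ in (0:ℝ)..c, θ ^ σ = c ^ (σ + 1) / (σ + 1) := by
  rw [integral_rpow (Or.inl (by linarith))]
  rw [Real.zero_rpow (by linarith : σ + 1 ≠ 0)]
  ring

private lemma aux_cont (σ a b : ℝ) (hσ : 0 < σ) :
    Continuous fun θ : ℝ => |θ * a - b| ^ σ := by
  apply (Real.continuous_rpow_const hσ.le).comp
  exact (continuous_abs.comp (by continuity))

private lemma aux_key (σ a b : ℝ) (hσ : 0 < σ) (ha : 0 ≤ a) (hb : 0 ≤ b) :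
    b ^ σ ≤ 2 * (σ + 1) * ∫ θ in (0:ℝ)..1, |θ * a - b| ^ σ := by
  have hσ1 : 0 < σ + 1 := by linarith
  have hintf : ∀ u v : ℝ, IntervalIntegrable (fun θ : ℝ => |θ * a - b| ^ σ)
      MeasureTheory.volume u v := fun u v => (aux_cont σ a b hσ).intervalIntegrable u v
  have hfnonneg : ∀ θ : ℝ, 0 ≤ |θ * a - b| ^ σ := fun θ =>
    Real.rpow_nonneg (abs_nonneg _) _
  rcases le_or_gt a b with hab | hab
  · -- a ≤ b : pointwise |θa - b| ≥ b(1-θ)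
    have hmono : ∀ θ ∈ Set.Icc (0:ℝ) 1, b ^ σ * (1 - θ) ^ σ ≤ |θ * a - b| ^ σ := by
      intro θ hθ
      rw [← Real.mul_rpow hb (by linarith [hθ.2])]
      apply Real.rpow_le_rpow (by nlinarith [hθ.1, hθ.2]) _ hσ.le
      have h1 : θ * a ≤ θ * b := mul_le_mul_of_nonneg_left hab hθ.1
      have h2 : b * (1 - θ) ≤ b - θ * a := by nlinarith
      calc b * (1 - θ) ≤ b - θ * a := h2
        _ ≤ |b - θ * a| := le_abs_self _
        _ = |θ * a - b| := abs_sub_comm _ _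
    have hI : ∫ θ in (0:ℝ)..1, b ^ σ * (1 - θ) ^ σ ≤ ∫ θ in (0:ℝ)..1, |θ * a - b| ^ σ := by
      apply intervalIntegral.integral_mono_on (by norm_num) _ (hintf 0 1) hmono
      exact (continuous_const.mul ((Real.continuous_rpow_const hσ.le).comp
        (by continuity))).intervalIntegrable 0 1
    have hcalc : ∫ θ in (0:ℝ)..1, b ^ σ * (1 - θ) ^ σ = b ^ σ / (σ + 1) := by
      rw [intervalIntegral.integral_const_mul]
      have : ∫ θ in (0:ℝ)..1, (1 - θ) ^ σ = ∫ u in (0:ℝ)..1, u ^ σ := by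
        have := intervalIntegral.integral_comp_sub_left (fun u : ℝ => u ^ σ) 1
          (a := 0) (b := 1)
        simpa using this
      rw [this, aux_pow_int σ 1 hσ (by norm_num), Real.one_rpow]
      ring
    rw [hcalc] at hI
    rw [div_le_iff₀ hσ1] at hI
    nlinarith [Real.rpow_nonneg hb σ]
  · -- b < a
    set t : ℝ := b / a with htdef
    have ha0 : 0 < a := lt_of_le_of_lt hb hab
    have ht0 : 0 ≤ t := div_nonneg hb ha0.le
    have ht1 : t < 1 := (div_lt_one ha0).mpr hab
    have hat : a * t = b := by rw [htdef]; field_simp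
    have haσ : 0 ≤ a ^ σ := Real.rpow_nonneg ha0.le _
    have hbt : b ^ σ = a ^ σ * t ^ σ := by rw [← Real.mul_rpow ha0.le ht0, hat]
    rcases le_or_gt t (1/2) with ht | ht
    · -- use ∫ over [t,1]
      have hsplit : ∫ θ in (0:ℝ)..1, |θ * a - b| ^ σ
          = (∫ θ in (0:ℝ)..t, |θ * a - b| ^ σ) + ∫ θ in t..1, |θ * a - b| ^ σ :=
        (intervalIntegral.integral_add_adjacent_intervals (hintf 0 t) (hintf t 1)).symm
      have h0t : 0 ≤ ∫ θ in (0:ℝ)..t, |θ * a - b| ^ σ :=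
        intervalIntegral.integral_nonneg ht0 (fun u _ => hfnonneg u)
      have hmono : ∀ θ ∈ Set.Icc t 1, a ^ σ * (θ - t) ^ σ ≤ |θ * a - b| ^ σ := by
        intro θ hθ
        rw [← Real.mul_rpow ha0.le (by linarith [hθ.1])]
        apply Real.rpow_le_rpow (by nlinarith [hθ.1]) _ hσ.le
        have : a * (θ - t) = θ * a - b := by rw [mul_sub, hat]; ring
        rw [this]; exact le_abs_self _
      have hI : ∫ θ in t..1, a ^ σ * (θ - t) ^ σ ≤ ∫ θ in t..1, |θ * a - b| ^ σ := by
        apply intervalIntegral.integral_mono_on ht1.le _ (hintf t 1) hmono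
        exact (continuous_const.mul ((Real.continuous_rpow_const hσ.le).comp
          (by continuity))).intervalIntegrable t 1
      have hcalc : ∫ θ in t..1, a ^ σ * (θ - t) ^ σ = a ^ σ * ((1 - t) ^ (σ + 1) / (σ + 1)) := by
        rw [intervalIntegral.integral_const_mul]
        have := intervalIntegral.integral_comp_sub_right (fun u : ℝ => u ^ σ) t
          (a := t) (b := 1)
        rw [this]
        simp only [sub_self]
        rw [aux_pow_int σ (1 - t) hσ (by linarith)]
      -- (1-t)^(σ+1) ≥ (1/2)^(σ+1) = (1/2)^σ * (1/2) ≥ t^σ / 2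
      have h1 : ((1:ℝ)/2) ^ (σ + 1) ≤ (1 - t) ^ (σ + 1) :=
        Real.rpow_le_rpow (by norm_num) (by linarith) (by linarith)
      have h2 : t ^ σ ≤ ((1:ℝ)/2) ^ σ := Real.rpow_le_rpow ht0 ht hσ.le
      have h3 : ((1:ℝ)/2) ^ (σ + 1) = ((1:ℝ)/2) ^ σ * (1/2) := by
        rw [Real.rpow_add (by norm_num), Real.rpow_one]
      have h4 : t ^ σ / 2 ≤ (1 - t) ^ (σ + 1) := by
        rw [h3] at h1; nlinarith
      have hfinal : a ^ σ * t ^ σ / (2 * (σ + 1)) ≤ ∫ θ in t..1, |θ * a - b| ^ σ :=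
        calc a ^ σ * t ^ σ / (2 * (σ + 1)) = a ^ σ * ((t ^ σ / 2) / (σ + 1)) := by
              rw [div_div, mul_div_assoc]
          _ ≤ a ^ σ * ((1 - t) ^ (σ + 1) / (σ + 1)) := by gcongr
          _ = ∫ θ in t..1, a ^ σ * (θ - t) ^ σ := hcalc.symm
          _ ≤ ∫ θ in t..1, |θ * a - b| ^ σ := hI
      rw [hbt, hsplit]
      rw [div_le_iff₀ (by positivity)] at hfinal
      have h5 : 0 ≤ 2 * (σ + 1) * ∫ θ in (0:ℝ)..t, |θ * a - b| ^ σ :=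
        mul_nonneg (by positivity) h0t
      linarith [hfinal, h5]
    · -- t > 1/2 : use ∫ over [0,t]
      have hsplit : ∫ θ in (0:ℝ)..1, |θ * a - b| ^ σ
          = (∫ θ in (0:ℝ)..t, |θ * a - b| ^ σ) + ∫ θ in t..1, |θ * a - b| ^ σ :=
        (intervalIntegral.integral_add_adjacent_intervals (hintf 0 t) (hintf t 1)).symm
      have ht1' : 0 ≤ ∫ θ in t..1, |θ * a - b| ^ σ :=
        intervalIntegral.integral_nonneg ht1.le (fun u _ => hfnonneg u)
      have hmono : ∀ θ ∈ Set.Icc (0:ℝ) t, a ^ σ * (t - θ) ^ σ ≤ |θ * a - b| ^ σ := by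
        intro θ hθ
        rw [← Real.mul_rpow ha0.le (by linarith [hθ.2])]
        apply Real.rpow_le_rpow (by nlinarith [hθ.2]) _ hσ.le
        have : a * (t - θ) = b - θ * a := by rw [mul_sub, hat]; ring
        rw [this]
        calc b - θ * a ≤ |b - θ * a| := le_abs_self _
          _ = |θ * a - b| := abs_sub_comm _ _
      have hI : ∫ θ in (0:ℝ)..t, a ^ σ * (t - θ) ^ σ ≤ ∫ θ in (0:ℝ)..t, |θ * a - b| ^ σ := by
        apply intervalIntegral.integral_mono_on ht0 _ (hintf 0 t) hmono
        exact (continuous_const.mul ((Real.continuous_rpow_const hσ.le).comp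
          (by continuity))).intervalIntegrable 0 t
      have hcalc : ∫ θ in (0:ℝ)..t, a ^ σ * (t - θ) ^ σ = a ^ σ * (t ^ (σ + 1) / (σ + 1)) := by
        rw [intervalIntegral.integral_const_mul]
        have := intervalIntegral.integral_comp_sub_left (fun u : ℝ => u ^ σ) t
          (a := 0) (b := t)
        simp only [sub_self, sub_zero] at this
        rw [this, aux_pow_int σ t hσ ht0]
      have h4 : t ^ σ / 2 ≤ t ^ (σ + 1) := by
        rw [Real.rpow_add_one (ne_of_gt (by linarith : (0:ℝ) < t))]
        nlinarith [Real.rpow_nonneg ht0 σ]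
      rw [hcalc] at hI
      have hfinal : a ^ σ * t ^ σ / (2 * (σ + 1)) ≤ ∫ θ in (0:ℝ)..t, |θ * a - b| ^ σ :=
        calc a ^ σ * t ^ σ / (2 * (σ + 1)) = a ^ σ * ((t ^ σ / 2) / (σ + 1)) := by
              rw [div_div, mul_div_assoc]
          _ ≤ a ^ σ * (t ^ (σ + 1) / (σ + 1)) := by gcongr
          _ ≤ ∫ θ in (0:ℝ)..t, |θ * a - b| ^ σ := hI
      rw [hbt, hsplit]
      rw [div_le_iff₀ (by positivity)] at hfinal
      have h5 : 0 ≤ 2 * (σ + 1) * ∫ θ in t..1, |θ * a - b| ^ σ :=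
        mul_nonneg (by positivity) ht1'
      linarith [hfinal, h5]

private lemma aux_const (σ : ℝ) (hσ : 0 < σ) :
    2 * (σ + 1) ≤ 2 ^ σ * (1 + 2 ^ σ * (1 + σ)) := by
  have h1 : (1:ℝ) ≤ 2 ^ σ := Real.one_le_rpow (by norm_num) hσ.le
  have h2 : 1 + σ ≤ 2 ^ σ * 2 ^ σ := by
    have : (2:ℝ) ^ σ * 2 ^ σ = 2 ^ (σ + σ) := (Real.rpow_add (by norm_num) σ σ).symm
    rw [this, Real.rpow_def_of_pos (by norm_num)]
    have hln : (0.6931471803:ℝ) < Real.log 2 := Real.log_two_gt_d9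
    have := Real.add_one_le_exp (Real.log 2 * (σ + σ))
    nlinarith
  nlinarith

/-- Let `σ > 0` and `ξ, η ∈ ℝ^d`. Then
`2^σ (1 + 2^σ(1+σ)) ∫₀¹ |θξ - η|^σ dθ ≥ |η|^σ`. -/
theorem stmt_5 (d : ℕ) (σ : ℝ) (hσ : 0 < σ) (ξ η : EuclideanSpace ℝ (Fin d)) :
    ‖η‖ ^ σ ≤ 2 ^ σ * (1 + 2 ^ σ * (1 + σ)) * ∫ θ in (0:ℝ)..1, ‖θ • ξ - η‖ ^ σ := by
  have hkey := aux_key σ ‖ξ‖ ‖η‖ hσ (norm_nonneg _) (norm_nonneg _)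
  have hcontR : Continuous fun θ : ℝ => ‖θ • ξ - η‖ ^ σ := by
    apply (Real.continuous_rpow_const hσ.le).comp
    exact (continuous_norm.comp ((continuous_id.smul continuous_const).sub continuous_const))
  have hmono : ∀ θ ∈ Set.Icc (0:ℝ) 1, |θ * ‖ξ‖ - ‖η‖| ^ σ ≤ ‖θ • ξ - η‖ ^ σ := by
    intro θ hθ
    apply Real.rpow_le_rpow (abs_nonneg _) _ hσ.le
    have h1 : |‖θ • ξ‖ - ‖η‖| ≤ ‖θ • ξ - η‖ := abs_norm_sub_norm_le _ _
    have h2 : ‖θ • ξ‖ = θ * ‖ξ‖ := by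
      rw [norm_smul, Real.norm_eq_abs, abs_of_nonneg hθ.1]
    rwa [h2] at h1
  have hI : ∫ θ in (0:ℝ)..1, |θ * ‖ξ‖ - ‖η‖| ^ σ ≤ ∫ θ in (0:ℝ)..1, ‖θ • ξ - η‖ ^ σ := by
    apply intervalIntegral.integral_mono_on (by norm_num)
      ((aux_cont σ ‖ξ‖ ‖η‖ hσ).intervalIntegrable 0 1)
      (hcontR.intervalIntegrable 0 1) hmono
  have hC := aux_const σ hσ
  have hIpos : 0 ≤ ∫ θ in (0:ℝ)..1, ‖θ • ξ - η‖ ^ σ :=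
    intervalIntegral.integral_nonneg (by norm_num)
      (fun u _ => Real.rpow_nonneg (norm_nonneg _) _)
  nlinarith [hkey, mul_le_mul_of_nonneg_left hI (by positivity : (0:ℝ) ≤ 2 * (σ + 1))]
end

section
/- Let σ > 0 and define the Fourier symbol m(ξ,η) := exp(-∫₀¹ |θξ - η|^σ dθ) for (ξ,η) ∈ ℝ^d × ℝ^d. Then there exists a constant c_σ > 0 depending only on σ such that m(ξ,η) ≤ C exp(-c_σ |(ξ,η)|^σ) for all ξ, η, where C depends only on σ. In particular, m ∈ L¹(ℝ^{2d}). -/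
open MeasureTheory Real

lemma aux_rpow_le_exp {u m : ℝ} (hu : 0 ≤ u) (hm : 0 < m) :
    u ^ m ≤ m ^ m * Real.exp u := by
  have h1 : u / m ≤ Real.exp (u / m - 1) := by
    have := Real.add_one_le_exp (u / m - 1); linarith
  have h2 : (u / m) ^ m ≤ (Real.exp (u / m - 1)) ^ m :=
    Real.rpow_le_rpow (by positivity) h1 hm.le
  have h3 : (Real.exp (u / m - 1)) ^ m = Real.exp ((u / m - 1) * m) := by
    rw [Real.rpow_def_of_pos (Real.exp_pos _), Real.log_exp]
  have h4 : (u / m) ^ m = u ^ m / m ^ m := Real.div_rpow hu hm.le m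
  have h5 : (u / m - 1) * m = u - m := by field_simp
  have h6 : Real.exp (u - m) ≤ Real.exp u := Real.exp_le_exp.2 (by linarith)
  have hmm : 0 < m ^ m := Real.rpow_pos_of_pos hm m
  rw [h4, h3, h5] at h2
  rw [div_le_iff₀ hmm] at h2
  calc u ^ m ≤ Real.exp (u - m) * m ^ m := h2
    _ ≤ m ^ m * Real.exp u := by nlinarith

lemma aux_one_dim_bound {b σ D : ℝ} (hb : 0 < b) (hσ : 0 < σ) (hD : 0 < D) :
    ∃ K > 0, ∀ t : ℝ, 0 ≤ t → (1 + t) ^ D ≤ K * Real.exp (b * t ^ σ) := by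
  refine ⟨2 ^ D * (1 + b ^ (-(D / σ)) * (D / σ) ^ (D / σ)), by positivity, fun t ht => ?_⟩
  have h2D : (0:ℝ) < 2 ^ D := Real.rpow_pos_of_pos two_pos D
  have hA : (0:ℝ) ≤ b ^ (-(D / σ)) := Real.rpow_nonneg hb.le _
  have hB : (0:ℝ) ≤ (D / σ) ^ (D / σ) := Real.rpow_nonneg (by positivity) _
  have hE : (1:ℝ) ≤ Real.exp (b * t ^ σ) :=
    Real.one_le_exp (by positivity)
  rcases le_or_gt t 1 with h1 | h1
  · have h : (1 + t) ^ D ≤ 2 ^ D := Real.rpow_le_rpow (by linarith) (by linarith) hD.le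
    nlinarith [mul_nonneg hA hB,
      mul_le_mul_of_nonneg_left hE (by positivity : (0:ℝ) ≤ 1 + b ^ (-(D / σ)) * (D / σ) ^ (D / σ))]
  · have ht0 : (0:ℝ) < t := lt_trans zero_lt_one h1
    have h2 : (1 + t) ^ D ≤ (2 * t) ^ D :=
      Real.rpow_le_rpow (by linarith) (by linarith) hD.le
    have h3 : (2 * t) ^ D = 2 ^ D * t ^ D := Real.mul_rpow (by norm_num) ht0.le
    have h4 : t ^ D = (t ^ σ) ^ (D / σ) := by
      rw [← Real.rpow_mul ht0.le]
      congr 1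
      field_simp
    have h5 : (t ^ σ) ^ (D / σ) = (b * t ^ σ) ^ (D / σ) * b ^ (-(D / σ)) := by
      have hbp : b ^ (D / σ) ≠ 0 := (Real.rpow_pos_of_pos hb _).ne'
      rw [Real.mul_rpow hb.le (Real.rpow_nonneg ht0.le σ), Real.rpow_neg hb.le]
      field_simp
    have h7 : (b * t ^ σ) ^ (D / σ) ≤ (D / σ) ^ (D / σ) * Real.exp (b * t ^ σ) :=
      aux_rpow_le_exp (by positivity) (by positivity)
    have h8 : (1 + t) ^ D ≤ 2 ^ D * ((D / σ) ^ (D / σ) * Real.exp (b * t ^ σ) * b ^ (-(D / σ))) := by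
      calc (1 + t) ^ D ≤ (2 * t) ^ D := h2
        _ = 2 ^ D * ((b * t ^ σ) ^ (D / σ) * b ^ (-(D / σ))) := by rw [h3, h4, h5]
        _ ≤ _ := by nlinarith [mul_le_mul_of_nonneg_right h7 hA]
    nlinarith [mul_nonneg hA hB, Real.exp_pos (b * t ^ σ),
      mul_pos h2D (Real.exp_pos (b * t ^ σ))]

lemma aux_integrable (d : ℕ) {b σ : ℝ} (hb : 0 < b) (hσ : 0 < σ) :
    Integrable (fun x : EuclideanSpace ℝ (Fin d) => Real.exp (-(b * ‖x‖ ^ σ))) := by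
  have hrpow : Continuous fun t : ℝ => t ^ σ :=
    continuous_iff_continuousAt.2 fun x => Real.continuousAt_rpow_const x σ (Or.inr hσ.le)
  obtain ⟨K, hK0, hK⟩ := aux_one_dim_bound (D := (d:ℝ) + 1) hb hσ (by positivity)
  have hint : Integrable (fun x : EuclideanSpace ℝ (Fin d) => K * (1 + ‖x‖) ^ (-((d:ℝ) + 1))) := by
    refine (integrable_one_add_norm ?_).const_mul K
    simp [finrank_euclideanSpace]
  refine hint.mono' ?_ (ae_of_all _ fun x => ?_)
  · exact (Real.continuous_exp.comp
      ((continuous_const.mul (hrpow.comp continuous_norm)).neg)).aestronglyMeasurable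
  · have h1 : (0:ℝ) < (1 + ‖x‖) ^ ((d:ℝ) + 1) :=
      Real.rpow_pos_of_pos (by positivity) _
    rw [Real.norm_of_nonneg (Real.exp_pos _).le, Real.exp_neg,
      Real.rpow_neg (by positivity), ← div_eq_mul_inv, ← one_div,
      div_le_div_iff₀ (Real.exp_pos _) h1]
    have := hK ‖x‖ (norm_nonneg x)
    nlinarith [Real.exp_pos (b * ‖x‖ ^ σ)]

lemma aux_key_s6 (d : ℕ) {σ : ℝ} (hσ : 0 < σ) (ξ η : EuclideanSpace ℝ (Fin d)) :
    (1/4) * ((1:ℝ)/16) ^ σ * (Real.sqrt (‖ξ‖ ^ 2 + ‖η‖ ^ 2)) ^ σ ≤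
      ∫ θ in (0:ℝ)..1, ‖θ • ξ - η‖ ^ σ := by
  set r := Real.sqrt (‖ξ‖ ^ 2 + ‖η‖ ^ 2) with hr
  have hr0 : 0 ≤ r := Real.sqrt_nonneg _
  have hrpow : Continuous fun t : ℝ => t ^ σ :=
    continuous_iff_continuousAt.2 fun x => Real.continuousAt_rpow_const x σ (Or.inr hσ.le)
  have hcf : Continuous fun θ : ℝ => ‖θ • ξ - η‖ ^ σ :=
    hrpow.comp ((continuous_id.smul continuous_const).sub continuous_const).norm
  have hintf : ∀ a b : ℝ, IntervalIntegrable (fun θ : ℝ => ‖θ • ξ - η‖ ^ σ) volume a b :=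
    fun a b => hcf.intervalIntegrable a b
  have hnorm : ∀ θ : ℝ, 0 ≤ θ → ‖θ • ξ‖ = θ * ‖ξ‖ := by
    intro θ hθ
    rw [norm_smul, Real.norm_eq_abs, abs_of_nonneg hθ]
  have hlow1 : ∀ θ : ℝ, ‖η‖ - ‖θ • ξ‖ ≤ ‖θ • ξ - η‖ := by
    intro θ
    rw [norm_sub_rev]
    exact norm_sub_norm_le _ _
  have hlow2 : ∀ θ : ℝ, ‖θ • ξ‖ - ‖η‖ ≤ ‖θ • ξ - η‖ := fun θ => norm_sub_norm_le _ _
  -- the target constant equals (1/4) * (r/16)^σ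
  have hconst : (1/4) * ((1:ℝ)/16) ^ σ * r ^ σ = (1/4) * (r / 16) ^ σ := by
    rw [show r / 16 = (1/16) * r by ring, Real.mul_rpow (by norm_num) hr0]
    ring
  rw [hconst]
  by_cases hcase : 2 * ‖ξ‖ ≤ ‖η‖
  · -- far case: the integrand is ≥ (‖η‖/2)^σ everywhere, and r ≤ 2‖η‖
    have hrη : r ≤ 2 * ‖η‖ := by
      rw [hr, show 2 * ‖η‖ = Real.sqrt ((2 * ‖η‖) ^ 2) by
        rw [Real.sqrt_sq (by positivity)]]
      apply Real.sqrt_le_sqrt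
      nlinarith [norm_nonneg ξ, norm_nonneg η]
    have hlb : ∀ θ ∈ Set.Icc (0:ℝ) 1, (r / 16) ^ σ ≤ ‖θ • ξ - η‖ ^ σ := by
      intro θ hθ
      apply Real.rpow_le_rpow (by positivity) ?_ hσ.le
      have h1 := hlow1 θ
      have h2 : ‖θ • ξ‖ = θ * ‖ξ‖ := hnorm θ hθ.1
      nlinarith [norm_nonneg ξ, hθ.1, hθ.2]
    calc (1/4) * (r / 16) ^ σ ≤ (r / 16) ^ σ := by
          nlinarith [Real.rpow_nonneg (by positivity : (0:ℝ) ≤ r / 16) σ]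
      _ = ∫ _ in (0:ℝ)..1, (r / 16) ^ σ := by simp
      _ ≤ ∫ θ in (0:ℝ)..1, ‖θ • ξ - η‖ ^ σ := by
          apply intervalIntegral.integral_mono_on (by norm_num)
            (intervalIntegrable_const) (hintf 0 1) hlb
  · -- near case: ‖η‖ < 2‖ξ‖, hence ‖ξ‖ > 0 and r ≤ 4‖ξ‖
    push_neg at hcase
    have hξ : 0 < ‖ξ‖ := by nlinarith [norm_nonneg η]
    have hrξ : r ≤ 4 * ‖ξ‖ := by
      rw [hr, show 4 * ‖ξ‖ = Real.sqrt ((4 * ‖ξ‖) ^ 2) by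
        rw [Real.sqrt_sq (by positivity)]]
      apply Real.sqrt_le_sqrt
      nlinarith [norm_nonneg η]
    have hquarter : r / 16 ≤ ‖ξ‖ / 4 := by linarith
    rcases le_or_gt (2 * ‖η‖) ‖ξ‖ with hsub | hsub
    · -- integrand ≥ ‖ξ‖/4 on [3/4, 1]
      have hlb : ∀ θ ∈ Set.Icc (3/4:ℝ) 1, (r / 16) ^ σ ≤ ‖θ • ξ - η‖ ^ σ := by
        intro θ hθ
        apply Real.rpow_le_rpow (by positivity) ?_ hσ.le
        have h1 := hlow2 θ
        have h2 : ‖θ • ξ‖ = θ * ‖ξ‖ := hnorm θ (by linarith [hθ.1])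
        nlinarith [hθ.1, hθ.2]
      have hsplit : (∫ θ in (0:ℝ)..(3/4), ‖θ • ξ - η‖ ^ σ)
          + (∫ θ in (3/4:ℝ)..1, ‖θ • ξ - η‖ ^ σ)
          = ∫ θ in (0:ℝ)..1, ‖θ • ξ - η‖ ^ σ :=
        intervalIntegral.integral_add_adjacent_intervals (hintf 0 (3/4)) (hintf (3/4) 1)
      have hpos : (0:ℝ) ≤ ∫ θ in (0:ℝ)..(3/4), ‖θ • ξ - η‖ ^ σ := by
        apply intervalIntegral.integral_nonneg (by norm_num)
        intro θ _
        positivity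
      have hpart : (1/4) * (r / 16) ^ σ ≤ ∫ θ in (3/4:ℝ)..1, ‖θ • ξ - η‖ ^ σ := by
        calc (1/4) * (r / 16) ^ σ = ∫ _ in (3/4:ℝ)..1, (r / 16) ^ σ := by
              rw [intervalIntegral.integral_const, smul_eq_mul]; norm_num
          _ ≤ _ := intervalIntegral.integral_mono_on (by norm_num)
              (intervalIntegrable_const) (hintf (3/4) 1) hlb
      linarith
    · -- integrand ≥ ‖ξ‖/4 on [0, 1/4]
      have hlb : ∀ θ ∈ Set.Icc (0:ℝ) (1/4), (r / 16) ^ σ ≤ ‖θ • ξ - η‖ ^ σ := by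
        intro θ hθ
        apply Real.rpow_le_rpow (by positivity) ?_ hσ.le
        have h1 := hlow1 θ
        have h2 : ‖θ • ξ‖ = θ * ‖ξ‖ := hnorm θ hθ.1
        nlinarith [hθ.1, hθ.2]
      have hsplit : (∫ θ in (0:ℝ)..(1/4), ‖θ • ξ - η‖ ^ σ)
          + (∫ θ in (1/4:ℝ)..1, ‖θ • ξ - η‖ ^ σ)
          = ∫ θ in (0:ℝ)..1, ‖θ • ξ - η‖ ^ σ :=
        intervalIntegral.integral_add_adjacent_intervals (hintf 0 (1/4)) (hintf (1/4) 1)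
      have hpos : (0:ℝ) ≤ ∫ θ in (1/4:ℝ)..1, ‖θ • ξ - η‖ ^ σ := by
        apply intervalIntegral.integral_nonneg (by norm_num)
        intro θ _
        positivity
      have hpart : (1/4) * (r / 16) ^ σ ≤ ∫ θ in (0:ℝ)..(1/4), ‖θ • ξ - η‖ ^ σ := by
        calc (1/4) * (r / 16) ^ σ = ∫ _ in (0:ℝ)..(1/4), (r / 16) ^ σ := by
              rw [intervalIntegral.integral_const, smul_eq_mul]; norm_num
          _ ≤ _ := intervalIntegral.integral_mono_on (by norm_num)
              (intervalIntegrable_const) (hintf 0 (1/4)) hlb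
      linarith

/-- Gaussian-type decay of the Fourier symbol of the fractional Kolmogorov
fundamental solution: for `σ > 0` and
`m(ξ,η) := exp(-∫₀¹ |θξ - η|^σ dθ)`, there are constants `C, c_σ > 0`
depending only on `σ` (and `d`) with `m(ξ,η) ≤ C exp(-c_σ |(ξ,η)|^σ)`;
in particular `m ∈ L¹(ℝ^{2d})`. -/
theorem stmt_6 (d : ℕ) (σ : ℝ) (hσ : 0 < σ) :
    ∃ C > 0, ∃ c > 0,
      (∀ ξ η : EuclideanSpace ℝ (Fin d),
          Real.exp (-∫ θ in (0:ℝ)..1, ‖θ • ξ - η‖ ^ σ) ≤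
            C * Real.exp (-c * (Real.sqrt (‖ξ‖ ^ 2 + ‖η‖ ^ 2)) ^ σ)) ∧
      Integrable (fun p : EuclideanSpace ℝ (Fin d) × EuclideanSpace ℝ (Fin d) =>
        Real.exp (-∫ θ in (0:ℝ)..1, ‖θ • p.1 - p.2‖ ^ σ)) := by
  set c : ℝ := (1/4) * ((1:ℝ)/16) ^ σ with hcdef
  have hc : 0 < c := by rw [hcdef]; positivity
  have key : ∀ ξ η : EuclideanSpace ℝ (Fin d),
      c * (Real.sqrt (‖ξ‖ ^ 2 + ‖η‖ ^ 2)) ^ σ ≤ ∫ θ in (0:ℝ)..1, ‖θ • ξ - η‖ ^ σ := by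
    intro ξ η
    have h := aux_key_s6 d hσ ξ η
    rw [hcdef]
    linarith
  have hrpow : Continuous fun t : ℝ => t ^ σ :=
    continuous_iff_continuousAt.2 fun x => Real.continuousAt_rpow_const x σ (Or.inr hσ.le)
  refine ⟨1, one_pos, c, hc, fun ξ η => ?_, ?_⟩
  · rw [one_mul]
    apply Real.exp_le_exp.2
    have := key ξ η
    nlinarith
  · -- integrability
    have hfac := aux_integrable d (b := c/2) (by positivity) hσ
    have hg : Integrable (fun p : EuclideanSpace ℝ (Fin d) × EuclideanSpace ℝ (Fin d) =>
        Real.exp (-(c/2 * ‖p.1‖ ^ σ)) * Real.exp (-(c/2 * ‖p.2‖ ^ σ))) := by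
      rw [MeasureTheory.Measure.volume_eq_prod]
      exact hfac.mul_prod hfac
    have huncurry : Continuous (Function.uncurry fun
        (p : EuclideanSpace ℝ (Fin d) × EuclideanSpace ℝ (Fin d)) (θ : ℝ) =>
        ‖θ • p.1 - p.2‖ ^ σ) := by
      apply hrpow.comp
      exact ((continuous_snd.smul continuous_fst.fst).sub continuous_fst.snd).norm
    have hcont : Continuous fun p : EuclideanSpace ℝ (Fin d) × EuclideanSpace ℝ (Fin d) =>
        ∫ θ in (0:ℝ)..1, ‖θ • p.1 - p.2‖ ^ σ :=
      intervalIntegral.continuous_parametric_intervalIntegral_of_continuous' huncurry 0 1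
    refine hg.mono' (Real.continuous_exp.comp hcont.neg).aestronglyMeasurable
      (ae_of_all _ fun p => ?_)
    rw [Real.norm_of_nonneg (Real.exp_pos _).le, ← Real.exp_add]
    apply Real.exp_le_exp.2
    have hk := key p.1 p.2
    have hx : ‖p.1‖ ^ σ ≤ (Real.sqrt (‖p.1‖ ^ 2 + ‖p.2‖ ^ 2)) ^ σ := by
      apply Real.rpow_le_rpow (norm_nonneg _) ?_ hσ.le
      exact Real.le_sqrt_of_sq_le (by nlinarith [norm_nonneg p.2, sq_nonneg ‖p.2‖])
    have hy : ‖p.2‖ ^ σ ≤ (Real.sqrt (‖p.1‖ ^ 2 + ‖p.2‖ ^ 2)) ^ σ := by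
      apply Real.rpow_le_rpow (norm_nonneg _) ?_ hσ.le
      exact Real.le_sqrt_of_sq_le (by nlinarith [norm_nonneg p.1, sq_nonneg ‖p.1‖])
    have h1 := mul_le_mul_of_nonneg_left hx (le_of_lt (half_pos hc))
    have h2 := mul_le_mul_of_nonneg_left hy (le_of_lt (half_pos hc))
    linarith
end

section
/- Let ũ: ℝ^{m} → ℂ^d and f̂: ℝ^{m} × ℝ^d → ℂ be Schwartz functions, and let Φ: ℝ^{m} × ℝ^d → ℝ^d be bounded measurable. Then the imaginary part of the trilinear convolution integral satisfies the exchange identity: 2 Im ∫∫ Φ(ρ,η) · (ũ *_ρ f̂)(ρ,η) \overline{f̂(ρ,η)} dρ dη = Im ∫∫∫ (Φ(ρ+ρ',η) - Φ(ρ',η)) · ũ(ρ) f̂(ρ',η) \overline{f̂(ρ+ρ',η)} dρ dρ' dη, provided ũ is the Fourier transform of a real-valued function (i.e. ũ(-ρ) = \overline{ũ(ρ)}) and Φ is real-valued. -/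
open MeasureTheory SchwartzMap

private lemma aux_fubini3 {X Y W : Type*} [MeasureSpace X] [MeasureSpace Y] [MeasureSpace W]
    [SigmaFinite (volume : Measure X)] [SigmaFinite (volume : Measure Y)]
    [SigmaFinite (volume : Measure W)]
    (G : X × (Y × W) → ℂ) (hG : Integrable G volume) :
    (∫ x, ∫ y, ∫ w, G (x, (y, w))) = ∫ z, G z := by
  have hG' : Integrable (Function.uncurry fun x (q : Y × W) => G (x, q))
      ((volume : Measure X).prod volume) := by
    rw [← Measure.volume_eq_prod]; exact hG
  calc (∫ x, ∫ y, ∫ w, G (x, (y, w)))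
      = ∫ x, ∫ q : Y × W, G (x, q) := by
        refine integral_congr_ae ?_
        filter_upwards [hG'.prod_right_ae] with x hx
        have hx' : Integrable (Function.uncurry fun y w => G (x, (y, w)))
            ((volume : Measure Y).prod volume) := hx
        rw [MeasureTheory.integral_integral hx', ← Measure.volume_eq_prod]
    _ = ∫ z, G z := by
        rw [MeasureTheory.integral_integral hG', ← Measure.volume_eq_prod]

private noncomputable def auxEquiv (m d : ℕ) :
    (EuclideanSpace ℝ (Fin m) × (EuclideanSpace ℝ (Fin m) × EuclideanSpace ℝ (Fin d))) ≃ᵐ ((EuclideanSpace ℝ (Fin m) × EuclideanSpace ℝ (Fin d)) × EuclideanSpace ℝ (Fin m)) where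
  toEquiv :=
    { toFun := fun z => ((z.1 + z.2.1, z.2.2), z.2.1)
      invFun := fun w => (w.1.1 - w.2, (w.2, w.1.2))
      left_inv := fun z => by simp
      right_inv := fun w => by simp }
  measurable_toFun :=
    ((measurable_fst.add (measurable_fst.comp measurable_snd)).prodMk
      (measurable_snd.comp measurable_snd)).prodMk (measurable_fst.comp measurable_snd)
  measurable_invFun :=
    ((measurable_fst.comp measurable_fst).sub measurable_snd).prodMk
      (measurable_snd.prodMk (measurable_snd.comp measurable_fst))

private lemma auxEquiv_mp (m d : ℕ) :
    MeasurePreserving (auxEquiv m d) volume volume := by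
  have ha : MeasurePreserving (MeasurableEquiv.prodAssoc.symm :
      EuclideanSpace ℝ (Fin m) × (EuclideanSpace ℝ (Fin m) × EuclideanSpace ℝ (Fin d)) ≃ᵐ (EuclideanSpace ℝ (Fin m) × EuclideanSpace ℝ (Fin m)) × EuclideanSpace ℝ (Fin d)) volume volume :=
    (volume_preserving_prodAssoc).symm _
  have hb : MeasurePreserving (fun w : (EuclideanSpace ℝ (Fin m) × EuclideanSpace ℝ (Fin m)) × EuclideanSpace ℝ (Fin d) => ((w.1.1 + w.1.2, w.1.2), w.2))
      volume volume := by
    rw [Measure.volume_eq_prod]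
    exact (measurePreserving_add_prod _ _).prod (MeasurePreserving.id _)
  have hc1 : MeasurePreserving (MeasurableEquiv.prodAssoc :
      (EuclideanSpace ℝ (Fin m) × EuclideanSpace ℝ (Fin m)) × EuclideanSpace ℝ (Fin d) ≃ᵐ EuclideanSpace ℝ (Fin m) × (EuclideanSpace ℝ (Fin m) × EuclideanSpace ℝ (Fin d))) volume volume := volume_preserving_prodAssoc
  have hc2 : MeasurePreserving (fun w : EuclideanSpace ℝ (Fin m) × (EuclideanSpace ℝ (Fin m) × EuclideanSpace ℝ (Fin d)) => (w.1, (w.2.2, w.2.1)))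
      volume volume := by
    have hsw : MeasurePreserving (Prod.swap : EuclideanSpace ℝ (Fin m) × EuclideanSpace ℝ (Fin d) → EuclideanSpace ℝ (Fin d) × EuclideanSpace ℝ (Fin m))
        (volume : Measure (EuclideanSpace ℝ (Fin m) × EuclideanSpace ℝ (Fin d))) (volume : Measure (EuclideanSpace ℝ (Fin d) × EuclideanSpace ℝ (Fin m))) := by
      rw [Measure.volume_eq_prod, Measure.volume_eq_prod]
      exact Measure.measurePreserving_swap
    rw [Measure.volume_eq_prod (EuclideanSpace ℝ (Fin m)) (EuclideanSpace ℝ (Fin m) × EuclideanSpace ℝ (Fin d)), Measure.volume_eq_prod (EuclideanSpace ℝ (Fin m)) (EuclideanSpace ℝ (Fin d) × EuclideanSpace ℝ (Fin m))]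
    exact (MeasurePreserving.id (volume : Measure (EuclideanSpace ℝ (Fin m)))).prod hsw
  have hc3 : MeasurePreserving (MeasurableEquiv.prodAssoc.symm :
      EuclideanSpace ℝ (Fin m) × (EuclideanSpace ℝ (Fin d) × EuclideanSpace ℝ (Fin m)) ≃ᵐ (EuclideanSpace ℝ (Fin m) × EuclideanSpace ℝ (Fin d)) × EuclideanSpace ℝ (Fin m)) volume volume :=
    (volume_preserving_prodAssoc).symm _
  exact ((hc3.comp (hc2.comp hc1)).comp hb).comp ha

private lemma aux_int {m d n : ℕ}
    (uh : SchwartzMap (EuclideanSpace ℝ (Fin m)) (Fin n → ℂ))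
    (fh : SchwartzMap (EuclideanSpace ℝ (Fin m) × EuclideanSpace ℝ (Fin d)) ℂ)
    (g : EuclideanSpace ℝ (Fin m) × (EuclideanSpace ℝ (Fin m) × EuclideanSpace ℝ (Fin d)) → ℂ)
    (hmeas : AEStronglyMeasurable g volume) (C : ℝ)
    (hbound : ∀ z, ‖g z‖ ≤ C * (‖uh z.1‖ * ‖fh z.2‖)) :
    Integrable g volume := by
  haveI : Measure.IsAddHaarMeasure (volume : Measure (EuclideanSpace ℝ (Fin m) × EuclideanSpace ℝ (Fin d))) := by
    rw [Measure.volume_eq_prod]; exact Measure.prod.instIsAddHaarMeasure _ _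
  have hbase : Integrable (fun z : EuclideanSpace ℝ (Fin m) × (EuclideanSpace ℝ (Fin m) × EuclideanSpace ℝ (Fin d)) => ‖uh z.1‖ * ‖fh z.2‖) volume := by
    rw [Measure.volume_eq_prod]
    exact (uh.integrable (μ := volume)).norm.mul_prod (fh.integrable (μ := volume)).norm
  exact (hbase.const_mul C).mono' hmeas (ae_of_all _ fun z => hbound z)

/-- Exchange identity for the trilinear convolution term arising from the
inhomogeneous flux `u·∇_x`: if `uh` is the Fourier transform of a real-valued
function (`uh(-ρ) = conj uh(ρ)`) and `Φ` is real-valued, bounded and measurable,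
then
`2 Im ∫∫ Φ(ρ,η)·(uh *_ρ fh)(ρ,η) conj fh(ρ,η) dρ dη
  = Im ∫∫∫ (Φ(ρ+ρ',η) - Φ(ρ',η))·uh(ρ) fh(ρ',η) conj fh(ρ+ρ',η) dρ dρ' dη`. -/
theorem stmt_13 (m d n : ℕ)
    (uh : SchwartzMap (EuclideanSpace ℝ (Fin m)) (Fin n → ℂ))
    (fh : SchwartzMap (EuclideanSpace ℝ (Fin m) × EuclideanSpace ℝ (Fin d)) ℂ)
    (Φ : EuclideanSpace ℝ (Fin m) × EuclideanSpace ℝ (Fin d) → Fin n → ℝ)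
    (hΦmeas : Measurable Φ) (hΦbdd : ∃ M, ∀ p, ‖Φ p‖ ≤ M)
    (hreal : ∀ ρ i, uh (-ρ) i = starRingEnd ℂ (uh ρ i)) :
    2 * (∑ i : Fin n,
        ∫ p : EuclideanSpace ℝ (Fin m) × EuclideanSpace ℝ (Fin d),
          ((Φ p i : ℝ) : ℂ) *
            (∫ ρ' : EuclideanSpace ℝ (Fin m), uh (p.1 - ρ') i * fh (ρ', p.2)) *
            starRingEnd ℂ (fh p)).im =
      (∫ ρ : EuclideanSpace ℝ (Fin m), ∫ ρ' : EuclideanSpace ℝ (Fin m),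
        ∫ η : EuclideanSpace ℝ (Fin d),
          (∑ i : Fin n, ((Φ (ρ + ρ', η) i - Φ (ρ', η) i : ℝ) : ℂ) * uh ρ i) *
            fh (ρ', η) * starRingEnd ℂ (fh (ρ + ρ', η))).im := by
  classical
  obtain ⟨M, hM⟩ := hΦbdd
  have hM0 : 0 ≤ M := le_trans (norm_nonneg _) (hM 0)
  obtain ⟨Cf, hCf⟩ : ∃ C, ∀ p : EuclideanSpace ℝ (Fin m) × EuclideanSpace ℝ (Fin d), ‖fh p‖ ≤ C := by
    obtain ⟨C, hC⟩ := fh.decay 0 0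
    exact ⟨C, fun p => by simpa using hC.2 p⟩
  have hCf0 : 0 ≤ Cf := le_trans (norm_nonneg _) (hCf 0)
  have hmap : Measurable fun z : EuclideanSpace ℝ (Fin m) × (EuclideanSpace ℝ (Fin m) × EuclideanSpace ℝ (Fin d)) => ((z.1 + z.2.1, z.2.2) : EuclideanSpace ℝ (Fin m) × EuclideanSpace ℝ (Fin d)) :=
    (measurable_fst.add (measurable_fst.comp measurable_snd)).prodMk
      (measurable_snd.comp measurable_snd)
  have hmapc : Continuous fun z : EuclideanSpace ℝ (Fin m) × (EuclideanSpace ℝ (Fin m) × EuclideanSpace ℝ (Fin d)) => ((z.1 + z.2.1, z.2.2) : EuclideanSpace ℝ (Fin m) × EuclideanSpace ℝ (Fin d)) :=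
    (continuous_fst.add (continuous_fst.comp continuous_snd)).prodMk
      (continuous_snd.comp continuous_snd)
  have hbnd : ∀ (φ : EuclideanSpace ℝ (Fin m) × (EuclideanSpace ℝ (Fin m) × EuclideanSpace ℝ (Fin d)) → EuclideanSpace ℝ (Fin m) × EuclideanSpace ℝ (Fin d)) (i : Fin n)
      (z : EuclideanSpace ℝ (Fin m) × (EuclideanSpace ℝ (Fin m) × EuclideanSpace ℝ (Fin d))),
      ‖(((Φ (φ z) i : ℝ) : ℂ) * starRingEnd ℂ (fh (z.1 + z.2.1, z.2.2)))
        * (uh z.1 i * fh z.2)‖ ≤ (M * Cf) * (‖uh z.1‖ * ‖fh z.2‖) := by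
    intro φ i z
    have e1 : ‖((Φ (φ z) i : ℝ) : ℂ)‖ ≤ M :=
      le_trans (by simpa using norm_le_pi_norm (Φ (φ z)) i) (hM _)
    have e2 : ‖uh z.1 i‖ ≤ ‖uh z.1‖ := norm_le_pi_norm (uh z.1) i
    have e3 : ‖starRingEnd ℂ (fh (z.1 + z.2.1, z.2.2))‖ ≤ Cf := by
      simpa using hCf (z.1 + z.2.1, z.2.2)
    calc ‖(((Φ (φ z) i : ℝ) : ℂ) * starRingEnd ℂ (fh (z.1 + z.2.1, z.2.2)))
        * (uh z.1 i * fh z.2)‖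
        = ‖((Φ (φ z) i : ℝ) : ℂ)‖ * ‖starRingEnd ℂ (fh (z.1 + z.2.1, z.2.2))‖
          * (‖uh z.1 i‖ * ‖fh z.2‖) := by
          rw [norm_mul, norm_mul, norm_mul]
      _ ≤ M * Cf * (‖uh z.1‖ * ‖fh z.2‖) :=
          mul_le_mul (mul_le_mul e1 e3 (norm_nonneg _) hM0)
            (mul_le_mul_of_nonneg_right e2 (norm_nonneg _))
            (mul_nonneg (norm_nonneg _) (norm_nonneg _)) (mul_nonneg hM0 hCf0)
  have hTi : ∀ i : Fin n, Integrable (fun z : EuclideanSpace ℝ (Fin m) × (EuclideanSpace ℝ (Fin m) × EuclideanSpace ℝ (Fin d)) =>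
      (((Φ (z.1 + z.2.1, z.2.2) i : ℝ) : ℂ) * starRingEnd ℂ (fh (z.1 + z.2.1, z.2.2)))
        * (uh z.1 i * fh z.2)) volume := by
    intro i
    refine aux_int uh fh _ ?_ (M * Cf) (hbnd (fun z => (z.1 + z.2.1, z.2.2)) i)
    refine Measurable.aestronglyMeasurable ?_
    have h1 : Measurable fun z : EuclideanSpace ℝ (Fin m) × (EuclideanSpace ℝ (Fin m) × EuclideanSpace ℝ (Fin d)) => ((Φ (z.1 + z.2.1, z.2.2) i : ℝ) : ℂ) :=
      Complex.measurable_ofReal.comp ((measurable_pi_apply i).comp (hΦmeas.comp hmap))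
    have h2 : Measurable fun z : EuclideanSpace ℝ (Fin m) × (EuclideanSpace ℝ (Fin m) × EuclideanSpace ℝ (Fin d)) =>
        starRingEnd ℂ (fh (z.1 + z.2.1, z.2.2)) :=
      (Complex.continuous_conj.comp (fh.continuous.comp hmapc)).measurable
    have h3c : Continuous fun z : EuclideanSpace ℝ (Fin m) × (EuclideanSpace ℝ (Fin m) × EuclideanSpace ℝ (Fin d)) => uh z.1 i :=
      ((continuous_apply i).comp uh.continuous).comp continuous_fst
    have h3 : Measurable fun z : EuclideanSpace ℝ (Fin m) × (EuclideanSpace ℝ (Fin m) × EuclideanSpace ℝ (Fin d)) => uh z.1 i :=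
      h3c.measurable
    have h4c : Continuous fun z : EuclideanSpace ℝ (Fin m) × (EuclideanSpace ℝ (Fin m) × EuclideanSpace ℝ (Fin d)) => fh z.2 :=
      fh.continuous.comp continuous_snd
    have h4 : Measurable fun z : EuclideanSpace ℝ (Fin m) × (EuclideanSpace ℝ (Fin m) × EuclideanSpace ℝ (Fin d)) => fh z.2 :=
      h4c.measurable
    exact (h1.mul h2).mul (h3.mul h4)
  have hHi : ∀ i : Fin n, Integrable (fun z : EuclideanSpace ℝ (Fin m) × (EuclideanSpace ℝ (Fin m) × EuclideanSpace ℝ (Fin d)) =>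
      (((Φ z.2 i : ℝ) : ℂ) * starRingEnd ℂ (fh (z.1 + z.2.1, z.2.2)))
        * (uh z.1 i * fh z.2)) volume := by
    intro i
    refine aux_int uh fh _ ?_ (M * Cf) (hbnd (fun z => z.2) i)
    refine Measurable.aestronglyMeasurable ?_
    have h1 : Measurable fun z : EuclideanSpace ℝ (Fin m) × (EuclideanSpace ℝ (Fin m) × EuclideanSpace ℝ (Fin d)) => ((Φ z.2 i : ℝ) : ℂ) :=
      Complex.measurable_ofReal.comp ((measurable_pi_apply i).comp (hΦmeas.comp measurable_snd))
    have h2 : Measurable fun z : EuclideanSpace ℝ (Fin m) × (EuclideanSpace ℝ (Fin m) × EuclideanSpace ℝ (Fin d)) =>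
        starRingEnd ℂ (fh (z.1 + z.2.1, z.2.2)) :=
      (Complex.continuous_conj.comp (fh.continuous.comp hmapc)).measurable
    have h3c : Continuous fun z : EuclideanSpace ℝ (Fin m) × (EuclideanSpace ℝ (Fin m) × EuclideanSpace ℝ (Fin d)) => uh z.1 i :=
      ((continuous_apply i).comp uh.continuous).comp continuous_fst
    have h3 : Measurable fun z : EuclideanSpace ℝ (Fin m) × (EuclideanSpace ℝ (Fin m) × EuclideanSpace ℝ (Fin d)) => uh z.1 i :=
      h3c.measurable
    have h4c : Continuous fun z : EuclideanSpace ℝ (Fin m) × (EuclideanSpace ℝ (Fin m) × EuclideanSpace ℝ (Fin d)) => fh z.2 :=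
      fh.continuous.comp continuous_snd
    have h4 : Measurable fun z : EuclideanSpace ℝ (Fin m) × (EuclideanSpace ℝ (Fin m) × EuclideanSpace ℝ (Fin d)) => fh z.2 :=
      h4c.measurable
    exact (h1.mul h2).mul (h3.mul h4)
  have hT : Integrable (fun z : EuclideanSpace ℝ (Fin m) × (EuclideanSpace ℝ (Fin m) × EuclideanSpace ℝ (Fin d)) => ∑ i : Fin n,
      (((Φ (z.1 + z.2.1, z.2.2) i : ℝ) : ℂ) * starRingEnd ℂ (fh (z.1 + z.2.1, z.2.2)))
        * (uh z.1 i * fh z.2)) volume :=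
    integrable_finset_sum _ fun i _ => hTi i
  have hH : Integrable (fun z : EuclideanSpace ℝ (Fin m) × (EuclideanSpace ℝ (Fin m) × EuclideanSpace ℝ (Fin d)) => ∑ i : Fin n,
      (((Φ z.2 i : ℝ) : ℂ) * starRingEnd ℂ (fh (z.1 + z.2.1, z.2.2)))
        * (uh z.1 i * fh z.2)) volume :=
    integrable_finset_sum _ fun i _ => hHi i
  -- Step 1: each summand of the LHS equals the corresponding T-integral
  have hSi : ∀ i : Fin n,
      (∫ p : EuclideanSpace ℝ (Fin m) × EuclideanSpace ℝ (Fin d), ((Φ p i : ℝ) : ℂ) *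
          (∫ ρ' : EuclideanSpace ℝ (Fin m), uh (p.1 - ρ') i * fh (ρ', p.2)) * starRingEnd ℂ (fh p))
        = ∫ z : EuclideanSpace ℝ (Fin m) × (EuclideanSpace ℝ (Fin m) × EuclideanSpace ℝ (Fin d)),
            (((Φ (z.1 + z.2.1, z.2.2) i : ℝ) : ℂ) * starRingEnd ℂ (fh (z.1 + z.2.1, z.2.2)))
              * (uh z.1 i * fh z.2) := by
    intro i
    have hKi : Integrable (fun w : (EuclideanSpace ℝ (Fin m) × EuclideanSpace ℝ (Fin d)) × EuclideanSpace ℝ (Fin m) =>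
        (((Φ w.1 i : ℝ) : ℂ) * starRingEnd ℂ (fh w.1))
          * (uh (w.1.1 - w.2) i * fh (w.2, w.1.2))) volume := by
      refine ((auxEquiv_mp m d).integrable_comp_emb (auxEquiv m d).measurableEmbedding).mp ?_
      have heq : ((fun w : (EuclideanSpace ℝ (Fin m) × EuclideanSpace ℝ (Fin d)) × EuclideanSpace ℝ (Fin m) =>
          (((Φ w.1 i : ℝ) : ℂ) * starRingEnd ℂ (fh w.1))
            * (uh (w.1.1 - w.2) i * fh (w.2, w.1.2))) ∘ (auxEquiv m d))
          = fun z : EuclideanSpace ℝ (Fin m) × (EuclideanSpace ℝ (Fin m) × EuclideanSpace ℝ (Fin d)) =>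
            (((Φ (z.1 + z.2.1, z.2.2) i : ℝ) : ℂ) * starRingEnd ℂ (fh (z.1 + z.2.1, z.2.2)))
              * (uh z.1 i * fh z.2) := by
        funext z
        simp [auxEquiv, Function.comp, add_sub_cancel_right]
      rw [heq]
      exact hTi i
    have hKi' : Integrable (Function.uncurry fun (p : EuclideanSpace ℝ (Fin m) × EuclideanSpace ℝ (Fin d)) (ρ' : EuclideanSpace ℝ (Fin m)) =>
        (((Φ p i : ℝ) : ℂ) * starRingEnd ℂ (fh p)) * (uh (p.1 - ρ') i * fh (ρ', p.2)))
        ((volume : Measure (EuclideanSpace ℝ (Fin m) × EuclideanSpace ℝ (Fin d))).prod volume) := by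
      rw [← Measure.volume_eq_prod]; exact hKi
    calc (∫ p : EuclideanSpace ℝ (Fin m) × EuclideanSpace ℝ (Fin d), ((Φ p i : ℝ) : ℂ) *
            (∫ ρ' : EuclideanSpace ℝ (Fin m), uh (p.1 - ρ') i * fh (ρ', p.2)) * starRingEnd ℂ (fh p))
        = ∫ p : EuclideanSpace ℝ (Fin m) × EuclideanSpace ℝ (Fin d), ∫ ρ' : EuclideanSpace ℝ (Fin m),
            (((Φ p i : ℝ) : ℂ) * starRingEnd ℂ (fh p)) * (uh (p.1 - ρ') i * fh (ρ', p.2)) := by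
          refine integral_congr_ae (ae_of_all _ fun p => ?_)
          beta_reduce
          rw [show (∫ ρ' : EuclideanSpace ℝ (Fin m),
              (((Φ p i : ℝ) : ℂ) * starRingEnd ℂ (fh p)) * (uh (p.1 - ρ') i * fh (ρ', p.2)))
            = (((Φ p i : ℝ) : ℂ) * starRingEnd ℂ (fh p)) *
                ∫ ρ' : EuclideanSpace ℝ (Fin m), uh (p.1 - ρ') i * fh (ρ', p.2)
            from integral_const_mul _ _]
          ring
      _ = ∫ w : (EuclideanSpace ℝ (Fin m) × EuclideanSpace ℝ (Fin d)) × EuclideanSpace ℝ (Fin m),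
            (((Φ w.1 i : ℝ) : ℂ) * starRingEnd ℂ (fh w.1))
              * (uh (w.1.1 - w.2) i * fh (w.2, w.1.2)) := by
          rw [MeasureTheory.integral_integral hKi', ← Measure.volume_eq_prod]
      _ = ∫ z : EuclideanSpace ℝ (Fin m) × (EuclideanSpace ℝ (Fin m) × EuclideanSpace ℝ (Fin d)), (fun w : (EuclideanSpace ℝ (Fin m) × EuclideanSpace ℝ (Fin d)) × EuclideanSpace ℝ (Fin m) =>
            (((Φ w.1 i : ℝ) : ℂ) * starRingEnd ℂ (fh w.1))
              * (uh (w.1.1 - w.2) i * fh (w.2, w.1.2))) (auxEquiv m d z) :=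
          ((auxEquiv_mp m d).integral_comp (auxEquiv m d).measurableEmbedding _).symm
      _ = ∫ z : EuclideanSpace ℝ (Fin m) × (EuclideanSpace ℝ (Fin m) × EuclideanSpace ℝ (Fin d)),
            (((Φ (z.1 + z.2.1, z.2.2) i : ℝ) : ℂ) * starRingEnd ℂ (fh (z.1 + z.2.1, z.2.2)))
              * (uh z.1 i * fh z.2) := by
          refine integral_congr_ae (ae_of_all _ fun z => ?_)
          simp [auxEquiv, add_sub_cancel_right]
  have hSA : (∑ i : Fin n,
      ∫ p : EuclideanSpace ℝ (Fin m) × EuclideanSpace ℝ (Fin d), ((Φ p i : ℝ) : ℂ) *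
        (∫ ρ' : EuclideanSpace ℝ (Fin m), uh (p.1 - ρ') i * fh (ρ', p.2)) * starRingEnd ℂ (fh p))
      = ∫ z : EuclideanSpace ℝ (Fin m) × (EuclideanSpace ℝ (Fin m) × EuclideanSpace ℝ (Fin d)), ∑ i : Fin n,
          (((Φ (z.1 + z.2.1, z.2.2) i : ℝ) : ℂ) * starRingEnd ℂ (fh (z.1 + z.2.1, z.2.2)))
            * (uh z.1 i * fh z.2) := by
    rw [integral_finset_sum _ fun i _ => hTi i]
    exact Finset.sum_congr rfl fun i _ => hSi i
  -- Step 2: the RHS equals A - B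
  have hRT : (∫ ρ : EuclideanSpace ℝ (Fin m), ∫ ρ' : EuclideanSpace ℝ (Fin m), ∫ η : EuclideanSpace ℝ (Fin d),
        (∑ i : Fin n, ((Φ (ρ + ρ', η) i - Φ (ρ', η) i : ℝ) : ℂ) * uh ρ i) *
          fh (ρ', η) * starRingEnd ℂ (fh (ρ + ρ', η)))
      = (∫ z : EuclideanSpace ℝ (Fin m) × (EuclideanSpace ℝ (Fin m) × EuclideanSpace ℝ (Fin d)), ∑ i : Fin n,
          (((Φ (z.1 + z.2.1, z.2.2) i : ℝ) : ℂ) * starRingEnd ℂ (fh (z.1 + z.2.1, z.2.2)))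
            * (uh z.1 i * fh z.2))
        - (∫ z : EuclideanSpace ℝ (Fin m) × (EuclideanSpace ℝ (Fin m) × EuclideanSpace ℝ (Fin d)), ∑ i : Fin n,
          (((Φ z.2 i : ℝ) : ℂ) * starRingEnd ℂ (fh (z.1 + z.2.1, z.2.2)))
            * (uh z.1 i * fh z.2)) := by
    calc (∫ ρ : EuclideanSpace ℝ (Fin m), ∫ ρ' : EuclideanSpace ℝ (Fin m), ∫ η : EuclideanSpace ℝ (Fin d),
        (∑ i : Fin n, ((Φ (ρ + ρ', η) i - Φ (ρ', η) i : ℝ) : ℂ) * uh ρ i) *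
          fh (ρ', η) * starRingEnd ℂ (fh (ρ + ρ', η)))
        = ∫ ρ : EuclideanSpace ℝ (Fin m), ∫ ρ' : EuclideanSpace ℝ (Fin m), ∫ η : EuclideanSpace ℝ (Fin d),
            ((∑ i : Fin n, (((Φ (ρ + ρ', η) i : ℝ) : ℂ) * starRingEnd ℂ (fh (ρ + ρ', η)))
              * (uh ρ i * fh (ρ', η)))
            - ∑ i : Fin n, (((Φ (ρ', η) i : ℝ) : ℂ) * starRingEnd ℂ (fh (ρ + ρ', η)))
              * (uh ρ i * fh (ρ', η))) := by
          refine integral_congr_ae (ae_of_all _ fun ρ => integral_congr_ae (ae_of_all _ fun ρ' =>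
            integral_congr_ae (ae_of_all _ fun η => ?_)))
          beta_reduce
          rw [Finset.sum_mul, Finset.sum_mul, ← Finset.sum_sub_distrib]
          refine Finset.sum_congr rfl fun i _ => ?_
          push_cast
          ring
      _ = ∫ z : EuclideanSpace ℝ (Fin m) × (EuclideanSpace ℝ (Fin m) × EuclideanSpace ℝ (Fin d)),
            ((∑ i : Fin n, (((Φ (z.1 + z.2.1, z.2.2) i : ℝ) : ℂ)
                * starRingEnd ℂ (fh (z.1 + z.2.1, z.2.2))) * (uh z.1 i * fh z.2))
            - ∑ i : Fin n, (((Φ z.2 i : ℝ) : ℂ) * starRingEnd ℂ (fh (z.1 + z.2.1, z.2.2)))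
                * (uh z.1 i * fh z.2)) :=
          aux_fubini3 (fun z : EuclideanSpace ℝ (Fin m) × (EuclideanSpace ℝ (Fin m) × EuclideanSpace ℝ (Fin d)) =>
            (∑ i : Fin n, (((Φ (z.1 + z.2.1, z.2.2) i : ℝ) : ℂ)
                * starRingEnd ℂ (fh (z.1 + z.2.1, z.2.2))) * (uh z.1 i * fh z.2))
            - ∑ i : Fin n, (((Φ z.2 i : ℝ) : ℂ) * starRingEnd ℂ (fh (z.1 + z.2.1, z.2.2)))
                * (uh z.1 i * fh z.2)) (hT.sub hH)
      _ = _ := integral_sub hT hH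
  -- Step 3: B = conj A
  have harith : ∀ a b : EuclideanSpace ℝ (Fin m), -a + (b + a) = b := fun a b => by abel
  have hBA : (∫ z : EuclideanSpace ℝ (Fin m) × (EuclideanSpace ℝ (Fin m) × EuclideanSpace ℝ (Fin d)), ∑ i : Fin n,
        (((Φ z.2 i : ℝ) : ℂ) * starRingEnd ℂ (fh (z.1 + z.2.1, z.2.2)))
          * (uh z.1 i * fh z.2))
      = starRingEnd ℂ (∫ z : EuclideanSpace ℝ (Fin m) × (EuclideanSpace ℝ (Fin m) × EuclideanSpace ℝ (Fin d)), ∑ i : Fin n,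
          (((Φ (z.1 + z.2.1, z.2.2) i : ℝ) : ℂ) * starRingEnd ℂ (fh (z.1 + z.2.1, z.2.2)))
            * (uh z.1 i * fh z.2)) := by
    calc (∫ z : EuclideanSpace ℝ (Fin m) × (EuclideanSpace ℝ (Fin m) × EuclideanSpace ℝ (Fin d)), ∑ i : Fin n,
          (((Φ z.2 i : ℝ) : ℂ) * starRingEnd ℂ (fh (z.1 + z.2.1, z.2.2)))
            * (uh z.1 i * fh z.2))
        = ∫ ρ : EuclideanSpace ℝ (Fin m), ∫ ρ' : EuclideanSpace ℝ (Fin m), ∫ η : EuclideanSpace ℝ (Fin d), ∑ i : Fin n,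
            (((Φ (ρ', η) i : ℝ) : ℂ) * starRingEnd ℂ (fh (ρ + ρ', η)))
              * (uh ρ i * fh (ρ', η)) :=
          (aux_fubini3 (fun z : EuclideanSpace ℝ (Fin m) × (EuclideanSpace ℝ (Fin m) × EuclideanSpace ℝ (Fin d)) => ∑ i : Fin n,
            (((Φ z.2 i : ℝ) : ℂ) * starRingEnd ℂ (fh (z.1 + z.2.1, z.2.2)))
              * (uh z.1 i * fh z.2)) hH).symm
      _ = ∫ ρ : EuclideanSpace ℝ (Fin m), (fun σ : EuclideanSpace ℝ (Fin m) => ∫ ρ' : EuclideanSpace ℝ (Fin m), ∫ η : EuclideanSpace ℝ (Fin d), ∑ i : Fin n,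
            (((Φ (ρ', η) i : ℝ) : ℂ) * starRingEnd ℂ (fh (σ + ρ', η)))
              * (uh σ i * fh (ρ', η))) (-ρ) :=
          (integral_neg_eq_self (fun σ : EuclideanSpace ℝ (Fin m) => ∫ ρ' : EuclideanSpace ℝ (Fin m), ∫ η : EuclideanSpace ℝ (Fin d), ∑ i : Fin n,
            (((Φ (ρ', η) i : ℝ) : ℂ) * starRingEnd ℂ (fh (σ + ρ', η)))
              * (uh σ i * fh (ρ', η))) volume).symm
      _ = ∫ ρ : EuclideanSpace ℝ (Fin m), ∫ ρ' : EuclideanSpace ℝ (Fin m), (fun τ : EuclideanSpace ℝ (Fin m) => ∫ η : EuclideanSpace ℝ (Fin d), ∑ i : Fin n,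
            (((Φ (τ, η) i : ℝ) : ℂ) * starRingEnd ℂ (fh (-ρ + τ, η)))
              * (uh (-ρ) i * fh (τ, η))) (ρ' + ρ) := by
          refine integral_congr_ae (ae_of_all _ fun ρ => ?_)
          exact (integral_add_right_eq_self (fun τ : EuclideanSpace ℝ (Fin m) => ∫ η : EuclideanSpace ℝ (Fin d), ∑ i : Fin n,
            (((Φ (τ, η) i : ℝ) : ℂ) * starRingEnd ℂ (fh (-ρ + τ, η)))
              * (uh (-ρ) i * fh (τ, η))) ρ).symm
      _ = ∫ ρ : EuclideanSpace ℝ (Fin m), ∫ ρ' : EuclideanSpace ℝ (Fin m), ∫ η : EuclideanSpace ℝ (Fin d), ∑ i : Fin n,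
            starRingEnd ℂ ((((Φ (ρ + ρ', η) i : ℝ) : ℂ) * starRingEnd ℂ (fh (ρ + ρ', η)))
              * (uh ρ i * fh (ρ', η))) := by
          refine integral_congr_ae (ae_of_all _ fun ρ => integral_congr_ae (ae_of_all _ fun ρ' =>
            integral_congr_ae (ae_of_all _ fun η => ?_)))
          show (∑ i : Fin n, (((Φ (ρ' + ρ, η) i : ℝ) : ℂ)
              * starRingEnd ℂ (fh (-ρ + (ρ' + ρ), η)))
              * (uh (-ρ) i * fh (ρ' + ρ, η))) = _
          rw [harith ρ ρ', add_comm ρ' ρ]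
          refine Finset.sum_congr rfl fun i _ => ?_
          rw [hreal ρ i, map_mul, map_mul, map_mul, Complex.conj_conj, Complex.conj_ofReal]
          ring
      _ = starRingEnd ℂ (∫ ρ : EuclideanSpace ℝ (Fin m), ∫ ρ' : EuclideanSpace ℝ (Fin m), ∫ η : EuclideanSpace ℝ (Fin d), ∑ i : Fin n,
            (((Φ (ρ + ρ', η) i : ℝ) : ℂ) * starRingEnd ℂ (fh (ρ + ρ', η)))
              * (uh ρ i * fh (ρ', η))) := by
          simp_rw [← map_sum, integral_conj]
      _ = starRingEnd ℂ (∫ z : EuclideanSpace ℝ (Fin m) × (EuclideanSpace ℝ (Fin m) × EuclideanSpace ℝ (Fin d)), ∑ i : Fin n,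
          (((Φ (z.1 + z.2.1, z.2.2) i : ℝ) : ℂ) * starRingEnd ℂ (fh (z.1 + z.2.1, z.2.2)))
            * (uh z.1 i * fh z.2)) :=
          congrArg (starRingEnd ℂ) (aux_fubini3 (fun z : EuclideanSpace ℝ (Fin m) × (EuclideanSpace ℝ (Fin m) × EuclideanSpace ℝ (Fin d)) => ∑ i : Fin n,
            (((Φ (z.1 + z.2.1, z.2.2) i : ℝ) : ℂ) * starRingEnd ℂ (fh (z.1 + z.2.1, z.2.2)))
              * (uh z.1 i * fh z.2)) hT)
  -- Final assembly
  rw [hSA, hRT, hBA]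
  rw [Complex.sub_im, Complex.conj_im]
  ring
end
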